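/- arXiv:1411.3832 — 2 statements merged into one kernel-verified Lean document; each statement's English description precedes it below -/
import Mathlib

section
/- Let B be a set of subsets of a fixed set that is totally ordered by inclusion and satisfies (K2). Assume that B has a greatest member and that for every nonempty chain C ⊆ IP(B), ⋂_{X ∈ C} X ∈ B. Then B is order-isomorphic to D(IS(B)) and to D(IP(B)). -/
/-- `X` and `Y` are immediate neighbors in `B` (ordered by inclusion). -/
def ImmNbr {α : Type*} (B : Set (Set α)) (X Y : Set α) : Prop :=
  X ∈ B ∧ Y ∈ B ∧ X ⊂ Y ∧ ¬∃ Z ∈ B, X ⊂ Z ∧ Z ⊂ Y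

/-- `ISet B` is the set of members of `B` having an immediate predecessor in `B`. -/
def ISet {α : Type*} (B : Set (Set α)) : Set (Set α) := {Y | ∃ X, ImmNbr B X Y}

/-- `IPSet B` is the set of members of `B` having an immediate successor in `B`. -/
def IPSet {α : Type*} (B : Set (Set α)) : Set (Set α) := {X | ∃ Y, ImmNbr B X Y}

/-- `B` satisfies (K2). -/
def K2Sets {α : Type*} (B : Set (Set α)) : Prop :=
  ∀ a ∈ B, ∀ b ∈ B, a ⊂ b → ∃ c d, ImmNbr B c d ∧ a ⊆ c ∧ d ⊆ b

section aux

variable {α : Type*} {B : Set (Set α)} (hchain : IsChain (· ⊆ ·) B)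

include hchain

omit hchain in
lemma memB_of_IP {X : Set α} (h : X ∈ IPSet B) : X ∈ B := h.choose_spec.1

/-- In a chain, the immediate successor is at most any strictly larger element. -/
lemma succ_le_of_lt {X Y W : Set α} (h : ImmNbr B X Y) (hW : W ∈ B) (hXW : X ⊂ W) :
    Y ⊆ W := by
  rcases hchain.total h.2.1 hW with hYW | hWY
  · exact hYW
  · rcases eq_or_ne W Y with rfl | hne
    · exact subset_rfl
    · exact absurd ⟨W, hW, hXW, ssubset_of_subset_of_ne hWY hne⟩ h.2.2.2

/-- Immediate successors are unique in a chain. -/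
lemma succ_unique {X Y Y' : Set α} (h : ImmNbr B X Y) (h' : ImmNbr B X Y') : Y = Y' := by
  have h1 : Y ⊆ Y' := succ_le_of_lt hchain h h'.2.1 h'.2.2.1
  have h2 : Y' ⊆ Y := succ_le_of_lt hchain h' h.2.1 h.2.2.1
  exact subset_antisymm h1 h2

/-- Immediate predecessors are unique in a chain. -/
lemma pred_unique {X X' Y : Set α} (h : ImmNbr B X Y) (h' : ImmNbr B X' Y) : X = X' := by
  rcases hchain.total h.1 h'.1 with h1 | h1
  · rcases eq_or_ne X X' with rfl | hne
    · rfl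
    · exact absurd ⟨X', h'.1, ssubset_of_subset_of_ne h1 hne, h'.2.2.1⟩ h.2.2.2
  · rcases eq_or_ne X' X with heq | hne
    · exact heq.symm
    · exact absurd ⟨X, h.1, ssubset_of_subset_of_ne h1 hne, h.2.2.1⟩ h'.2.2.2

end aux

theorem stmt7 {α : Type*} (B : Set (Set α)) (hchain : IsChain (· ⊆ ·) B)
    (hK2 : K2Sets B)
    (htop : ∃ X₁ ∈ B, ∀ X ∈ B, X ⊆ X₁)
    (hI : ∀ C ⊆ IPSet B, C.Nonempty → IsChain (· ⊆ ·) C → ⋂₀ C ∈ B) :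
    Nonempty (↥B ≃o LowerSet ↥(ISet B)) ∧ Nonempty (↥B ≃o LowerSet ↥(IPSet B)) := by
  classical
  obtain ⟨X₁, hX₁B, hX₁top⟩ := htop
  -- linear order on ↥B
  letI : LinearOrder ↥B :=
    { (inferInstance : PartialOrder ↥B) with
      le_total := fun a b => hchain.total a.2 b.2
      toDecidableLE := fun _ _ => Classical.dec _ }
  -- the map ψ : B → LowerSet (IPSet B)
  set ψ : ↥B → LowerSet ↥(IPSet B) := fun X =>
    ⟨{Z : ↥(IPSet B) | (Z : Set α) ⊂ (X : Set α)}, by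
      intro a b hba ha
      exact lt_of_le_of_lt (α := Set α) hba ha⟩ with hψ
  have hmemψ : ∀ (X : ↥B) (Z : ↥(IPSet B)), Z ∈ ψ X ↔ (Z : Set α) ⊂ (X : Set α) :=
    fun X Z => Iff.rfl
  -- ψ is strictly monotone
  have hstrict : StrictMono ψ := by
    intro X X' hXX'
    have hss : (X : Set α) ⊂ (X' : Set α) := hXX'
    obtain ⟨c, d, hcd, hXc, hdX'⟩ := hK2 X.1 X.2 X'.1 X'.2 hss
    have hcIP : c ∈ IPSet B := ⟨d, hcd⟩
    have hle : ψ X ≤ ψ X' := by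
      rw [← LowerSet.coe_subset_coe]
      intro Z hZ
      exact lt_of_lt_of_le (α := Set α) hZ hss.subset
    refine lt_of_le_of_ne hle ?_
    intro heq
    have hc' : (⟨c, hcIP⟩ : ↥(IPSet B)) ∈ ψ X' := lt_of_lt_of_le hcd.2.2.1 hdX'
    rw [← heq] at hc'
    have : (c : Set α) ⊂ (X : Set α) := hc'
    exact this.not_subset hXc
  -- ψ is surjective
  have hsurj : Function.Surjective ψ := by
    intro L
    by_cases hU : ∃ Z : ↥(IPSet B), Z ∉ L
    · -- the complement U of L in IPSet B is nonempty
      set U : Set (Set α) := {W | ∃ h : W ∈ IPSet B, (⟨W, h⟩ : ↥(IPSet B)) ∉ L} with hUdef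
      have hUsub : U ⊆ IPSet B := fun W hW => hW.1
      have hUne : U.Nonempty := by
        obtain ⟨Z, hZ⟩ := hU
        exact ⟨Z.1, Z.2, by simpa using hZ⟩
      have hUchain : IsChain (· ⊆ ·) U := hchain.mono fun W hW => hW.1.choose_spec.1
      have hXB : ⋂₀ U ∈ B := hI U hUsub hUne hUchain
      refine ⟨⟨⋂₀ U, hXB⟩, ?_⟩
      apply le_antisymm
      · -- ψ ⟨⋂₀ U⟩ ≤ L
        rw [← LowerSet.coe_subset_coe]
        intro Z hZ
        have hZlt : (Z : Set α) ⊂ ⋂₀ U := hZ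
        by_contra hZL
        have hZU : (Z : Set α) ∈ U := ⟨Z.2, by simpa using hZL⟩
        exact absurd (Set.sInter_subset_of_mem hZU) (not_le_of_gt hZlt)
      · -- L ≤ ψ ⟨⋂₀ U⟩
        rw [← LowerSet.coe_subset_coe]
        intro Z hZL
        -- first: Z ⊆ W for every W ∈ U
        have hZsub : ∀ W ∈ U, (Z : Set α) ⊂ W := by
          rintro W ⟨hWIP, hWL⟩
          rcases hchain.total (Z.2.choose_spec.1) (hWIP.choose_spec.1) with hZW | hWZ
          · refine ssubset_of_subset_of_ne hZW ?_
            rintro rfl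
            exact hWL hZL
          · exfalso
            exact hWL (L.lower (show ((⟨W, hWIP⟩ : ↥(IPSet B)) : Set α) ≤ (Z : Set α) from hWZ) hZL)
        have hZle : (Z : Set α) ⊆ ⋂₀ U := by
          intro x hx
          exact Set.mem_sInter.2 fun W hW => (hZsub W hW).subset hx
        refine ssubset_of_subset_of_ne hZle ?_
        -- strictness: use the immediate successor of Z
        intro heq
        obtain ⟨Y, hY⟩ := Z.2
        have hYsub : Y ⊆ ⋂₀ U := by
          intro x hx
          refine Set.mem_sInter.2 fun W hW => ?_
          exact succ_le_of_lt hchain hY (memB_of_IP (hUsub hW)) (hZsub W hW) hx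
        rw [← heq] at hYsub
        exact absurd (hY.2.2.1.trans_le hYsub) (lt_irrefl (Z : Set α))
    · -- L is all of IPSet B : take the top
      push_neg at hU
      refine ⟨⟨X₁, hX₁B⟩, ?_⟩
      apply le_antisymm
      · rw [← LowerSet.coe_subset_coe]
        intro Z _
        exact hU Z
      · rw [← LowerSet.coe_subset_coe]
        intro Z _
        obtain ⟨Y, hY⟩ := Z.2
        exact hY.2.2.1.trans_le (hX₁top Y hY.2.1)
  have iso2 : ↥B ≃o LowerSet ↥(IPSet B) := StrictMono.orderIsoOfSurjective ψ hstrict hsurj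
  -- order iso between IPSet B and ISet B via immediate successor
  have hsucc : ∀ Z : ↥(IPSet B), ImmNbr B Z.1 (Classical.choose Z.2) :=
    fun Z => Classical.choose_spec Z.2
  have hpred : ∀ Y : ↥(ISet B), ImmNbr B (Classical.choose Y.2) Y.1 :=
    fun Y => Classical.choose_spec Y.2
  have g : ↥(IPSet B) ≃o ↥(ISet B) := by
    refine ⟨⟨fun Z => ⟨Classical.choose Z.2, Z.1, hsucc Z⟩,
            fun Y => ⟨Classical.choose Y.2, Y.1, hpred Y⟩, ?_, ?_⟩, ?_⟩
    · intro Z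
      apply Subtype.ext
      exact pred_unique hchain
        (hpred ⟨Classical.choose Z.2, Z.1, hsucc Z⟩) (hsucc Z)
    · intro Y
      apply Subtype.ext
      exact succ_unique hchain
        (hsucc ⟨Classical.choose Y.2, Y.1, hpred Y⟩) (hpred Y)
    · intro Z Z'
      simp only [Equiv.coe_fn_mk]
      constructor
      · intro h
        by_contra hZZ'
        have h1 : (Z' : Set α) ⊆ (Z : Set α) := (hchain.total Z.2.choose_spec.1 Z'.2.choose_spec.1).resolve_left hZZ'
        have h2 : (Z' : Set α) ⊂ (Z : Set α) :=
          ssubset_of_subset_of_ne h1 (fun he => hZZ' (Subtype.ext he.symm).le)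
        have h3 : Classical.choose Z'.2 ⊆ (Z : Set α) :=
          succ_le_of_lt hchain (hsucc Z') Z.2.choose_spec.1 h2
        have h4 : (Z : Set α) ⊂ Classical.choose Z.2 := (hsucc Z).2.2.1
        exact absurd ((h4.trans_le h).trans_le h3) (lt_irrefl (Z : Set α))
      · intro h
        rcases eq_or_ne Z Z' with rfl | hne
        · exact le_refl _
        · have h2 : (Z : Set α) ⊂ (Z' : Set α) :=
            ssubset_of_subset_of_ne h (fun he => hne (Subtype.ext he))
          have h3 : Classical.choose Z.2 ⊆ (Z' : Set α) :=
            succ_le_of_lt hchain (hsucc Z) Z'.2.choose_spec.1 h2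
          exact h3.trans (hsucc Z').2.2.1.subset
  exact ⟨⟨iso2.trans (LowerSet.map g)⟩, ⟨iso2⟩⟩
end

section
/- The map t ↦ H_t is an order-reversing bijection from T onto IS(isolated(Γ)); that is, it is a bijection of T onto the set of isolated subgroups of Γ having an immediate predecessor in isolated(Γ), and for all s, t ∈ T one has s ≤ t if and only if H_t ⊆ H_s. -/
/-- The carrier of Γ: functions `T → G` with well-ordered support. -/
def Gamma (T G : Type*) [LinearOrder T] [Zero G] [LT G] : Set (T → G) :=
  {f | (Function.support f).IsWF}

/-- The (left-to-right lexicographic) order on functions `T → G`: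
`f ≤ g` iff `f = g` or `f` and `g` agree before some point `t` at which `f t < g t`. -/
def lexLE {T G : Type*} [LinearOrder T] [LT G] (f g : T → G) : Prop :=
  f = g ∨ ∃ t, (∀ s, s < t → f s = g s) ∧ f t < g t

/-- `H` is an isolated subgroup of Γ: a subgroup of Γ that is convex for the
lexicographic order. -/
def IsIsolated (T G : Type*) [LinearOrder T] [AddCommGroup G] [LinearOrder G]
    [IsOrderedAddMonoid G]
    (H : Set (T → G)) : Prop :=
  H ⊆ Gamma T G ∧ (0 : T → G) ∈ H ∧ (∀ f ∈ H, ∀ g ∈ H, f + g ∈ H) ∧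
  (∀ f ∈ H, -f ∈ H) ∧
  ∀ h ∈ H, ∀ g ∈ Gamma T G, lexLE 0 g → lexLE g h → g ∈ H

/-- The T-isolated subgroup `H_t`: elements of Γ vanishing strictly before `t`. -/
def Ht (T G : Type*) [LinearOrder T] [Zero G] [LT G] (t : T) : Set (T → G) :=
  {f ∈ Gamma T G | ∀ s, s < t → f s = 0}

/-- The dual T-isolated subgroup `dH_t`: elements of Γ vanishing at and before `t`. -/
def dHt (T G : Type*) [LinearOrder T] [Zero G] [LT G] (t : T) : Set (T → G) :=
  {f ∈ Gamma T G | ∀ s, s ≤ t → f s = 0}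

section helpers
variable {T G : Type*} [LinearOrder T] [AddCommGroup G] [LinearOrder G] [IsOrderedAddMonoid G]

def sgl (t : T) (c : G) : T → G := fun s => if s = t then c else 0

lemma sgl_self (t : T) (c : G) : sgl t c t = c := if_pos rfl
lemma sgl_ne {s t : T} (h : s ≠ t) (c : G) : sgl t c s = 0 := if_neg h

lemma sgl_mem_Gamma (t : T) (c : G) : sgl t c ∈ Gamma T G := by
  have hsub : Function.support (sgl t c) ⊆ {t} := by
    intro s hs
    by_contra h
    exact hs (sgl_ne h c)
  exact Set.IsWF.mono (Set.Finite.isWF (Set.finite_singleton t)) hsub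

lemma zero_mem_Gamma : (0 : T → G) ∈ Gamma T G := by
  show (Function.support (0 : T → G)).IsWF
  have h : Function.support (0 : T → G) = ∅ := by
    ext s; simp
  rw [h]; exact Set.isWF_empty

lemma neg_mem_Gamma {f : T → G} (hf : f ∈ Gamma T G) : -f ∈ Gamma T G := by
  show (Function.support (-f)).IsWF
  have h : Function.support (-f) = Function.support f := by
    ext s; simp
  rw [h]; exact hf

lemma add_mem_Gamma {f g : T → G} (hf : f ∈ Gamma T G) (hg : g ∈ Gamma T G) :
    f + g ∈ Gamma T G :=
  Set.IsWF.mono (Set.IsWF.union hf hg) (Function.support_add f g)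

lemma lexLE_neg {f g : T → G} (h : lexLE f g) : lexLE (-g) (-f) := by
  rcases h with rfl | ⟨t, ht, hlt⟩
  · exact Or.inl rfl
  · exact Or.inr ⟨t, fun s hs => by simp [ht s hs], by simpa using hlt⟩

lemma lex_total {f g : T → G} (hf : f ∈ Gamma T G) (hg : g ∈ Gamma T G) :
    lexLE f g ∨ lexLE g f := by
  by_cases hfg : f = g
  · exact Or.inl (Or.inl hfg)
  · have hwf : (Function.support (f - g)).IsWF := by
      rw [sub_eq_add_neg]; exact add_mem_Gamma hf (neg_mem_Gamma hg)
    have hne : (Function.support (f - g)).Nonempty := by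
      rcases Function.ne_iff.mp hfg with ⟨s, hs⟩
      exact ⟨s, by simpa [sub_ne_zero] using hs⟩
    have hmmem := hwf.min_mem hne
    have hmne : f (hwf.min hne) ≠ g (hwf.min hne) := by
      simpa [sub_ne_zero] using hmmem
    have hbelow : ∀ s, s < hwf.min hne → f s = g s := by
      intro s hs
      by_contra h
      exact hwf.not_lt_min hne (by simpa [sub_ne_zero] using h) hs
    rcases lt_or_gt_of_ne hmne with h | h
    · exact Or.inl (Or.inr ⟨_, hbelow, h⟩)
    · exact Or.inr (Or.inr ⟨_, fun s hs => (hbelow s hs).symm, h⟩)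

lemma lead_pos {f : T → G} {m : T} (h0 : lexLE 0 f) (hb : ∀ s, s < m → f s = 0)
    (hm : f m ≠ 0) : 0 < f m := by
  rcases h0 with h | ⟨t, ht, hlt⟩
  · exact absurd (congrFun h m).symm hm
  · rcases lt_trichotomy t m with h1 | rfl | h1
    · exact absurd (hb t h1) (ne_of_gt (show (0:G) < f t from hlt))
    · exact hlt
    · exact absurd (ht m h1).symm hm

lemma positivize {H : Set (T → G)} (hH : IsIsolated T G H) {f : T → G} (hf : f ∈ H) :
    ∃ f', f' ∈ H ∧ lexLE 0 f' ∧ (f' = f ∨ f' = -f) := by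
  rcases lex_total zero_mem_Gamma (hH.1 hf) with h | h
  · exact ⟨f, hf, h, Or.inl rfl⟩
  · exact ⟨-f, hH.2.2.2.1 f hf, by simpa using lexLE_neg h, Or.inr rfl⟩

lemma nsmul_mem_iso {H : Set (T → G)} (hH : IsIsolated T G H) {f} (hf : f ∈ H) :
    ∀ n : ℕ, n • f ∈ H := by
  intro n
  induction n with
  | zero => simpa using hH.2.1
  | succ n ih => rw [succ_nsmul]; exact hH.2.2.1 _ ih _ hf

lemma key_absorb [Archimedean G] {Z : Set (T → G)} (hZ : IsIsolated T G Z)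
    {h : T → G} {m : T} (hhZ : h ∈ Z) (hh0 : ∀ s, s < m → h s = 0) (hhm : h m ≠ 0) :
    Ht T G m ⊆ Z := by
  obtain ⟨h', hh'Z, hh'pos, hcase⟩ := positivize hZ hhZ
  have hh'0 : ∀ s, s < m → h' s = 0 := by
    rcases hcase with rfl | rfl
    · exact hh0
    · intro s hs; simp [hh0 s hs]
  have hh'm : h' m ≠ 0 := by
    rcases hcase with rfl | rfl
    · exact hhm
    · simpa using hhm
  have hpos : 0 < h' m := lead_pos hh'pos hh'0 hh'm
  have main : ∀ g, g ∈ Gamma T G → (∀ s, s < m → g s = 0) → lexLE 0 g → g ∈ Z := by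
    intro g hgΓ hg0 hgpos
    obtain ⟨n, hn⟩ := Archimedean.arch (g m) hpos
    refine hZ.2.2.2.2 ((n+1) • h') (nsmul_mem_iso hZ hh'Z (n+1)) g hgΓ hgpos (Or.inr ⟨m, ?_, ?_⟩)
    · intro s hs
      show g s = (n+1) • h' s
      simp [hg0 s hs, hh'0 s hs]
    · show g m < (n+1) • h' m
      rw [succ_nsmul]
      exact lt_of_le_of_lt hn (lt_add_of_pos_right _ hpos)
  rintro g ⟨hgΓ, hg0⟩
  rcases lex_total zero_mem_Gamma hgΓ with hp | hn
  · exact main g hgΓ hg0 hp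
  · have h2 := main (-g) (neg_mem_Gamma hgΓ) (fun s hs => by simp [hg0 s hs])
      (by simpa using lexLE_neg hn)
    simpa using hZ.2.2.2.1 _ h2

end helpers

section hu
variable {T G : Type*} [LinearOrder T] [AddCommGroup G] [LinearOrder G] [IsOrderedAddMonoid G]

def dHt' (T G : Type*) [LinearOrder T] [Zero G] [LT G] (t : T) : Set (T → G) :=
  {f ∈ Gamma T G | ∀ s, s ≤ t → f s = 0}

def HU (T G : Type*) [LinearOrder T] [AddCommGroup G] [LinearOrder G] [IsOrderedAddMonoid G] (U : Set T) :
    Set (T → G) :=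
  {f ∈ Gamma T G | Function.support f ⊆ U}

lemma HU_mono {U V : Set T} (h : U ⊆ V) : HU T G U ⊆ HU T G V :=
  fun _ hf => ⟨hf.1, hf.2.trans h⟩

lemma sgl_mem_HU {U : Set T} {t : T} {c : G} (hc : c ≠ 0) :
    sgl t c ∈ HU T G U ↔ t ∈ U := by
  constructor
  · intro hf
    exact hf.2 (by rw [Function.mem_support, sgl_self]; exact hc)
  · intro ht
    refine ⟨sgl_mem_Gamma t c, fun s hs => ?_⟩
    by_cases h : s = t
    · rwa [h]
    · exact absurd (sgl_ne h c) hs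

lemma Ht_eq (t : T) : Ht T G t = HU T G {s | t ≤ s} := by
  ext f
  constructor
  · rintro ⟨hΓ, hv⟩
    refine ⟨hΓ, fun s hs => ?_⟩
    by_contra h
    exact hs (hv s (lt_of_not_ge h))
  · rintro ⟨hΓ, hsupp⟩
    refine ⟨hΓ, fun s hs => ?_⟩
    by_contra h
    exact absurd (hsupp h) (not_le.mpr hs)

lemma dHt'_eq (t : T) : dHt' T G t = HU T G {s | t < s} := by
  ext f
  constructor
  · rintro ⟨hΓ, hv⟩
    refine ⟨hΓ, fun s hs => ?_⟩
    by_contra h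
    exact hs (hv s (le_of_not_gt h))
  · rintro ⟨hΓ, hsupp⟩
    refine ⟨hΓ, fun s hs => ?_⟩
    by_contra h
    exact absurd (hsupp h) (not_lt.mpr hs)

lemma isolated_HU {U : Set T} (hU : IsUpperSet U) : IsIsolated T G (HU T G U) := by
  refine ⟨fun f hf => hf.1, ⟨zero_mem_Gamma, by simp⟩, ?_, ?_, ?_⟩
  · intro f hf g hg
    exact ⟨add_mem_Gamma hf.1 hg.1, (Function.support_add f g).trans (Set.union_subset hf.2 hg.2)⟩
  · intro f hf
    refine ⟨neg_mem_Gamma hf.1, fun s hs => hf.2 ?_⟩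
    simpa using hs
  · intro h hh g hgΓ hg0 hgh
    refine ⟨hgΓ, ?_⟩
    rcases hg0 with h0 | ⟨t0, ht0, hlt0⟩
    · rw [← h0]
      intro s hs; simp at hs
    · have hg0' : ∀ s, s < t0 → g s = 0 := fun s hs => (ht0 s hs).symm
      have hgt0 : (0:G) < g t0 := hlt0
      rcases hgh with rfl | ⟨t1, ht1, hlt1⟩
      · exact hh.2
      · obtain ⟨t', ht'le, ht'supp⟩ : ∃ t', t' ≤ t0 ∧ h t' ≠ 0 := by
          rcases lt_trichotomy t1 t0 with h1 | rfl | h1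
          · refine ⟨t1, h1.le, ?_⟩
            have : g t1 = 0 := hg0' t1 h1
            exact ne_of_gt (this ▸ hlt1)
          · exact ⟨t1, le_rfl, ne_of_gt (lt_trans hgt0 hlt1)⟩
          · exact ⟨t0, le_rfl, (ht1 t0 h1) ▸ (ne_of_gt hgt0)⟩
        intro s hs
        have hst0 : t0 ≤ s := by
          by_contra hlt
          exact hs (hg0' s (lt_of_not_ge hlt))
        exact hU (ht'le.trans hst0) (hh.2 ht'supp)

def UH (H : Set (T → G)) : Set T := {t | ∃ f ∈ H, f t ≠ 0}

lemma exists_pos (G : Type*) [AddCommGroup G] [LinearOrder G] [IsOrderedAddMonoid G] [Nontrivial G] :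
    ∃ c : G, 0 < c := by
  obtain ⟨c, hc⟩ := exists_ne (0 : G)
  rcases hc.lt_or_gt with h | h
  · exact ⟨-c, by simpa using h⟩
  · exact ⟨c, h⟩

lemma UH_upper [Nontrivial G] {H : Set (T → G)} (hH : IsIsolated T G H) :
    IsUpperSet (UH H) := by
  intro t t' htt' ht
  obtain ⟨f, hfH, hft⟩ := ht
  rcases eq_or_lt_of_le htt' with rfl | hlt
  · exact ⟨f, hfH, hft⟩
  obtain ⟨f', hf'H, hf'pos, hcase⟩ := positivize hH hfH
  have hf't : f' t ≠ 0 := by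
    rcases hcase with rfl | rfl
    · exact hft
    · simpa using hft
  obtain ⟨c, hc⟩ := exists_pos G
  rcases hf'pos with h0 | ⟨m, hm, hmlt⟩
  · exact absurd (congrFun h0 t).symm hf't
  have hmt : m ≤ t := by
    by_contra hmt
    exact hf't (hm t (lt_of_not_ge hmt)).symm
  have hg : sgl t' c ∈ H := by
    refine hH.2.2.2.2 f' hf'H _ (sgl_mem_Gamma t' c) (Or.inr ⟨t', ?_, ?_⟩) (Or.inr ⟨m, ?_, ?_⟩)
    · intro s hs
      exact (sgl_ne (ne_of_lt hs) c).symm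
    · show (0:G) < sgl t' c t'
      rw [sgl_self]; exact hc
    · intro s hs
      have hne : s ≠ t' := ne_of_lt (lt_of_lt_of_le hs (hmt.trans hlt.le))
      show sgl t' c s = f' s
      rw [sgl_ne hne c]; exact hm s hs
    · have hne : m ≠ t' := ne_of_lt (lt_of_le_of_lt hmt hlt)
      show sgl t' c m < f' m
      rw [sgl_ne hne c]; exact hmlt
  exact ⟨sgl t' c, hg, by rw [sgl_self]; exact ne_of_gt hc⟩

lemma isolated_eq [Archimedean G] {H : Set (T → G)} (hH : IsIsolated T G H) :
    H = HU T G (UH H) := by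
  apply Set.Subset.antisymm
  · intro f hf
    exact ⟨hH.1 hf, fun s hs => ⟨f, hf, hs⟩⟩
  · have main : ∀ f, f ∈ Gamma T G → Function.support f ⊆ UH H → lexLE 0 f → f ∈ H := by
      intro f hfΓ hsupp hfpos
      rcases hfpos with h0 | ⟨t0, ht0, hlt0⟩
      · rw [← h0]; exact hH.2.1
      · have ht0supp : t0 ∈ Function.support f :=
          Function.mem_support.mpr (ne_of_gt (show (0:G) < f t0 from hlt0))
        obtain ⟨h, hhH, hht0⟩ := hsupp ht0supp
        obtain ⟨h', hh'H, hh'pos, hcase⟩ := positivize hH hhH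
        have hh't0 : h' t0 ≠ 0 := by
          rcases hcase with rfl | rfl
          · exact hht0
          · simpa using hht0
        rcases hh'pos with h0' | ⟨m, hm, hmlt⟩
        · exact absurd (congrFun h0' t0).symm hh't0
        have hmt0 : m ≤ t0 := by
          by_contra hcc
          exact hh't0 (hm t0 (lt_of_not_ge hcc)).symm
        exact key_absorb hH hh'H (fun s hs => (hm s hs).symm)
          (ne_of_gt (show (0:G) < h' m from hmlt))
          ⟨hfΓ, fun s hs => (ht0 s (lt_of_lt_of_le hs hmt0)).symm⟩
    intro f hf
    rcases lex_total zero_mem_Gamma hf.1 with hp | hn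
    · exact main f hf.1 hf.2 hp
    · have h2 := main (-f) (neg_mem_Gamma hf.1)
        (fun s hs => hf.2 (by simpa using hs)) (by simpa using lexLE_neg hn)
      simpa using hH.2.2.2.1 _ h2

end hu

theorem stmt12 {T G : Type*} [LinearOrder T] [Nonempty T]
    [AddCommGroup G] [LinearOrder G] [IsOrderedAddMonoid G] [Archimedean G] [Nontrivial G] :
    (∀ t : T, Ht T G t ∈ ISet {H : Set (T → G) | IsIsolated T G H}) ∧
    (∀ s t : T, Ht T G s = Ht T G t → s = t) ∧
    (∀ H ∈ ISet {H : Set (T → G) | IsIsolated T G H}, ∃ t : T, Ht T G t = H) ∧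
    (∀ s t : T, s ≤ t ↔ Ht T G t ⊆ Ht T G s) := by
  obtain ⟨c, hc⟩ := exists_pos G
  have hcne : c ≠ 0 := ne_of_gt hc
  have p4 : ∀ s t : T, s ≤ t ↔ Ht T G t ⊆ Ht T G s := by
    intro s t
    constructor
    · intro hst f hf
      exact ⟨hf.1, fun r hr => hf.2 r (lt_of_lt_of_le hr hst)⟩
    · intro hsub
      by_contra hns
      have hts : t < s := lt_of_not_ge hns
      have h1 : sgl t c ∈ Ht T G t :=
        ⟨sgl_mem_Gamma t c, fun r hr => sgl_ne (ne_of_lt hr) c⟩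
      have h2 := (hsub h1).2 t hts
      rw [sgl_self] at h2
      exact hcne h2
  refine ⟨?_, ?_, ?_, p4⟩
  · -- part 1
    intro t
    refine ⟨dHt' T G t, ?_, ?_, ?_, ?_⟩
    · show IsIsolated T G (dHt' T G t)
      rw [dHt'_eq]
      exact isolated_HU (isUpperSet_Ioi t)
    · show IsIsolated T G (Ht T G t)
      rw [Ht_eq]
      exact isolated_HU (isUpperSet_Ici t)
    · rw [Set.ssubset_iff_subset_ne]
      constructor
      · intro f hf
        exact ⟨hf.1, fun s hs => hf.2 s hs.le⟩
      · intro heq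
        have h1 : sgl t c ∈ Ht T G t :=
          ⟨sgl_mem_Gamma t c, fun r hr => sgl_ne (ne_of_lt hr) c⟩
        rw [← heq] at h1
        have h2 := h1.2 t le_rfl
        rw [sgl_self] at h2
        exact hcne h2
    · rintro ⟨Z, hZiso, hXZ, hZY⟩
      obtain ⟨f, hfZ, hfnd⟩ := Set.exists_of_ssubset hXZ
      have hfH : f ∈ Ht T G t := hZY.subset hfZ
      have hft : f t ≠ 0 := by
        intro h
        exact hfnd ⟨hfH.1, fun s hs =>
          hs.lt_or_eq.elim (hfH.2 s) (fun he => by rw [he]; exact h)⟩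
      exact hZY.not_subset (key_absorb hZiso hfZ hfH.2 hft)
  · -- part 2
    intro s t heq
    exact le_antisymm ((p4 s t).mpr heq.symm.subset) ((p4 t s).mpr heq.subset)
  · -- part 3
    intro H hH
    obtain ⟨X, hXiso, hHiso, hXH, hno⟩ := hH
    have hXiso' : IsIsolated T G X := hXiso
    have hHiso' : IsIsolated T G H := hHiso
    have hU : H = HU T G (UH H) := isolated_eq hHiso'
    have hV : X = HU T G (UH X) := isolated_eq hXiso'
    have hVU : UH X ⊆ UH H := by
      rintro r ⟨f, hf, hfr⟩
      exact ⟨f, hXH.subset hf, hfr⟩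
    have hVne : UH X ≠ UH H := by
      intro he
      exact hXH.ne (by rw [hV, he, ← hU])
    obtain ⟨t, htU, htV⟩ := Set.exists_of_ssubset (Set.ssubset_iff_subset_ne.mpr ⟨hVU, hVne⟩)
    refine ⟨t, ?_⟩
    have hWup : IsUpperSet (UH X ∪ {s | t ≤ s}) :=
      (UH_upper hXiso').union (isUpperSet_Ici t)
    have hWU : UH X ∪ {s | t ≤ s} ⊆ UH H := by
      rintro r (hr | hr)
      · exact hVU hr
      · exact (UH_upper hHiso') hr htU
    have hXZ : X ⊂ HU T G (UH X ∪ {s | t ≤ s}) := by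
      rw [Set.ssubset_iff_subset_ne]
      constructor
      · exact hV.subset.trans (HU_mono Set.subset_union_left)
      · intro he
        have hmem : sgl t c ∈ X := by
          rw [he]
          exact (sgl_mem_HU hcne).mpr (Or.inr le_rfl)
        exact htV ⟨sgl t c, hmem, by rw [sgl_self]; exact hcne⟩
    have hZH : HU T G (UH X ∪ {s | t ≤ s}) ⊆ H := by
      rw [hU]; exact HU_mono hWU
    have hZeq : HU T G (UH X ∪ {s | t ≤ s}) = H := by
      by_contra hne
      exact hno ⟨HU T G (UH X ∪ {s | t ≤ s}), isolated_HU hWup, hXZ,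
        Set.ssubset_iff_subset_ne.mpr ⟨hZH, hne⟩⟩
    have hUW : UH H ⊆ UH X ∪ {s | t ≤ s} := by
      intro u hu
      have hmem : sgl u c ∈ HU T G (UH X ∪ {s | t ≤ s}) := by
        rw [hZeq, hU]
        exact (sgl_mem_HU hcne).mpr hu
      exact (sgl_mem_HU hcne).mp hmem
    have hUeq : UH H = {s | t ≤ s} := by
      apply Set.Subset.antisymm
      · intro u hu
        rcases hUW hu with h | h
        · by_contra hnt
          exact htV ((UH_upper hXiso') (le_of_not_ge hnt) h)
        · exact h
      · intro u hu
        exact (UH_upper hHiso') hu htU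
    rw [Ht_eq, ← hUeq, ← hU]
end
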